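/- arXiv:1705.03224 — 2 statements merged into one kernel-verified Lean document; each statement's English description precedes it below -/
import Mathlib

section
/- Let $U:[0,\infty)\to\mathbb{R}$ be continuous, $g_t$ the chordal Loewner chain driven by $U$, $z\in\mathbb{H}$, and $\lambda_t=\min_{0\le s\le t}|z-U(s)|$. If $\lambda_t\ge\sqrt{8t}$ then $|g_t(z)-z| < \frac{4t}{\lambda_t+\sqrt{\lambda_t^2-8t}}$ and $1\ge \frac{\Im g_t(z)}{\Im z} > \exp\left(-\frac{8t}{(\lambda_t+\sqrt{\lambda_t^2-8t})^2}\right)$. -/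
open Set Metric MeasureTheory Filter Topology

/-- If `λ_t = min_{0≤s≤t}|z - U(s)| ≥ √(8t)` then
`|g_t(z)-z| < 4t/(λ_t+√(λ_t²-8t))` and
`1 ≥ Im g_t(z)/Im z > exp(-8t/(λ_t+√(λ_t²-8t))²)`. -/
theorem loewner_corollary_estimates
    (U : ℝ → ℝ) (hU : Continuous U) (z : ℂ) (hz : 0 < z.im)
    (T : ℝ) (g : ℝ → ℂ) (hg0 : g 0 = z)
    (hode : ∀ s ∈ Set.Ico (0:ℝ) T, HasDerivAt g (2 / (g s - (U s : ℂ))) s)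
    (hne : ∀ s ∈ Set.Ico (0:ℝ) T, g s ≠ (U s : ℂ))
    (t : ℝ) (ht : 0 < t) (htT : t < T)
    (lam : ℝ) (hlamdef : lam = sInf ((fun s => ‖z - (U s : ℂ)‖) '' Set.Icc 0 t))
    (hlam : Real.sqrt (8 * t) ≤ lam) :
    ‖g t - z‖ < 4 * t / (lam + Real.sqrt (lam ^ 2 - 8 * t))
      ∧ (g t).im / z.im ≤ 1
      ∧ Real.exp (-(8 * t) / (lam + Real.sqrt (lam ^ 2 - 8 * t)) ^ 2) < (g t).im / z.im := by
  have h8t : (0:ℝ) ≤ 8 * t := by linarith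
  have hlam0 : 0 < lam := lt_of_lt_of_le (Real.sqrt_pos.mpr (by linarith)) hlam
  have hlamsq : 8 * t ≤ lam ^ 2 := by
    nlinarith [Real.sq_sqrt h8t, Real.sqrt_nonneg (8*t)]
  set r := Real.sqrt (lam ^ 2 - 8 * t) with hr
  have hr0 : 0 ≤ r := Real.sqrt_nonneg _
  have hrsq : r ^ 2 = lam ^ 2 - 8 * t := Real.sq_sqrt (by linarith)
  set m : ℝ := (lam + r) / 2 with hm
  have hm0 : 0 < m := by rw [hm]; linarith
  have hlr0 : 0 < lam + r := by linarith
  have hlrne : lam + r ≠ 0 := ne_of_gt hlr0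
  have hmlam : m < lam := by rw [hm]; nlinarith
  have hmid : lam - 2 / m * t = m := by
    rw [hm]; field_simp; nlinarith
  have hsub : Icc (0:ℝ) t ⊆ Ico 0 T := fun s hs => ⟨hs.1, lt_of_le_of_lt hs.2 htT⟩
  have hlam_le : ∀ s ∈ Icc (0:ℝ) t, lam ≤ ‖z - (U s : ℂ)‖ := by
    intro s hs
    rw [hlamdef]
    exact csInf_le ⟨0, by rintro x ⟨u, hu, rfl⟩; positivity⟩ ⟨s, hs, rfl⟩
  set F : ℝ → ℝ := fun s => ‖g s - (U s : ℂ)‖ with hF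
  have hgc : ∀ s ∈ Icc (0:ℝ) t, ContinuousAt g s := fun s hs => (hode s (hsub hs)).continuousAt
  have hFpos : ∀ s ∈ Icc (0:ℝ) t, 0 < F s := fun s hs =>
    norm_pos_iff.mpr (sub_ne_zero.mpr (hne s (hsub hs)))
  have hFca : ∀ s ∈ Icc (0:ℝ) t, ContinuousAt F s := fun s hs =>
    continuous_norm.continuousAt.comp
      ((hgc s hs).sub (Complex.continuous_ofReal.continuousAt.comp hU.continuousAt))
  have hFc : ContinuousOn F (Icc 0 t) := fun s hs => (hFca s hs).continuousWithinAt
  -- the integral formula for g s - z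
  have hfc : ∀ s ∈ Icc (0:ℝ) t, ContinuousAt (fun u => 2 / (g u - (U u : ℂ))) s := by
    intro s hs
    exact continuousAt_const.div
      ((hgc s hs).sub (Complex.continuous_ofReal.continuousAt.comp hU.continuousAt))
      (sub_ne_zero.mpr (hne s (hsub hs)))
  have hint : ∀ s ∈ Icc (0:ℝ) t, IntervalIntegrable (fun u => 2 / (g u - (U u : ℂ))) volume 0 s := by
    intro s hs
    apply ContinuousOn.intervalIntegrable
    rw [uIcc_of_le hs.1]
    exact fun u hu => (hfc u ⟨hu.1, hu.2.trans hs.2⟩).continuousWithinAt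
  have hgz : ∀ s ∈ Icc (0:ℝ) t, g s - z = ∫ u in (0:ℝ)..s, 2 / (g u - (U u : ℂ)) := by
    intro s hs
    have key := intervalIntegral.integral_eq_sub_of_hasDerivAt
      (f := g) (f' := fun u => 2 / (g u - (U u : ℂ))) ?_ (hint s hs)
    · rw [hg0] at key
      exact key.symm
    · intro u hu
      rw [uIcc_of_le hs.1] at hu
      exact hode u (hsub ⟨hu.1, hu.2.trans hs.2⟩)
  -- bootstrap bound
  have hboot : ∀ s ∈ Icc (0:ℝ) t, (∀ u ∈ Icc 0 s, m ≤ F u) → lam - 2 / m * s ≤ F s := by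
    intro s hs hFm
    have hnorm : ‖g s - z‖ ≤ 2 / m * |s - 0| := by
      rw [hgz s hs]
      apply intervalIntegral.norm_integral_le_of_norm_le_const
      intro u hu
      rw [uIoc_of_le hs.1] at hu
      have hu' : u ∈ Icc (0:ℝ) s := ⟨hu.1.le, hu.2⟩
      have hFu : m ≤ F u := hFm u hu'
      have : ‖(2 : ℂ) / (g u - (U u : ℂ))‖ = 2 / F u := by
        rw [norm_div, Complex.norm_ofNat]
      rw [this]
      gcongr
    have htri : ‖z - (U s : ℂ)‖ - ‖g s - z‖ ≤ F s := by
      have h1 : ‖z - (U s : ℂ)‖ ≤ ‖z - g s‖ + ‖g s - (U s : ℂ)‖ := by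
        have := norm_add_le (z - g s) (g s - (U s : ℂ))
        simpa using this
      have h2 : ‖z - g s‖ = ‖g s - z‖ := norm_sub_rev z (g s)
      rw [h2] at h1
      linarith
    have := hlam_le s hs
    rw [abs_of_nonneg (by linarith [hs.1] : (0:ℝ) ≤ s - 0)] at hnorm
    have hsle : 2 / m * (s - 0) ≤ 2 / m * s := by simp
    nlinarith
  -- main claim: F ≥ m on [0,t], strictly on [0,t)
  have hF0 : m < F 0 := by
    have : F 0 = ‖z - (U 0 : ℂ)‖ := by rw [hF]; simp [hg0]
    rw [this]
    exact lt_of_lt_of_le hmlam (hlam_le 0 ⟨le_refl _, ht.le⟩)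
  have hMain : (∀ u ∈ Icc (0:ℝ) t, m ≤ F u) ∧ (∀ u ∈ Ico (0:ℝ) t, m < F u) := by
    by_cases hB : ∃ s ∈ Icc (0:ℝ) t, F s ≤ m
    · set B := Icc (0:ℝ) t ∩ F ⁻¹' (Iic m) with hBdef
      have hBclosed : IsClosed B := hFc.preimage_isClosed_of_isClosed isClosed_Icc isClosed_Iic
      have hBne : B.Nonempty := by obtain ⟨s, hs1, hs2⟩ := hB; exact ⟨s, hs1, hs2⟩
      have hBbdd : BddBelow B := ⟨0, fun x hx => hx.1.1⟩
      set s₁ := sInf B with hs₁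
      have hs₁B : s₁ ∈ B := hBclosed.csInf_mem hBne hBbdd
      have hs₁mem : s₁ ∈ Icc (0:ℝ) t := hs₁B.1
      have hFs₁le : F s₁ ≤ m := hs₁B.2
      have hstrict : ∀ u ∈ Ico (0:ℝ) s₁, m < F u := by
        intro u hu
        by_contra h
        exact absurd (csInf_le hBbdd ⟨⟨hu.1, hu.2.le.trans hs₁mem.2⟩, not_lt.mp h⟩)
          (not_le.mpr hu.2)
      have hs₁pos : 0 < s₁ := by
        rcases lt_or_eq_of_le hs₁mem.1 with h | h
        · exact h
        · exact absurd hFs₁le (by rw [← h]; exact not_le.mpr hF0)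
      have hFs₁ge : m ≤ F s₁ := by
        have hcl : s₁ ∈ closure (Ico 0 s₁) := by
          rw [closure_Ico (ne_of_lt hs₁pos)]
          exact ⟨hs₁pos.le, le_refl _⟩
        have hten : Tendsto F (𝓝[Ico 0 s₁] s₁) (𝓝 (F s₁)) :=
          (hFc s₁ hs₁mem).mono (fun u hu => ⟨hu.1, hu.2.le.trans hs₁mem.2⟩)
        haveI : (𝓝[Ico 0 s₁] s₁).NeBot := mem_closure_iff_nhdsWithin_neBot.mp hcl
        exact ge_of_tendsto hten (eventually_nhdsWithin_of_forall fun u hu => (hstrict u hu).le)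
      have hs₁t : s₁ = t := by
        by_contra h
        have hlt : s₁ < t := lt_of_le_of_ne hs₁mem.2 h
        have hb := hboot s₁ hs₁mem (fun u hu => by
          rcases lt_or_eq_of_le hu.2 with h' | h'
          · exact (hstrict u ⟨hu.1, h'⟩).le
          · rw [h']; exact hFs₁ge)
        have : lam - 2 / m * t < lam - 2 / m * s₁ := by
          have : 2 / m * s₁ < 2 / m * t := by
            apply mul_lt_mul_of_pos_left hlt; positivity
          linarith
        rw [hmid] at this
        linarith
      constructor
      · intro u hu
        rcases lt_or_eq_of_le hu.2 with h' | h'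
        · exact (hstrict u ⟨hu.1, by rw [hs₁t]; exact h'⟩).le
        · rw [h', ← hs₁t]; exact hFs₁ge
      · intro u hu
        exact hstrict u ⟨hu.1, by rw [hs₁t]; exact hu.2⟩
    · push_neg at hB
      exact ⟨fun u hu => (hB u hu).le, fun u hu => hB u ⟨hu.1, hu.2.le⟩⟩
  obtain ⟨hA, hAs⟩ := hMain
  -- first conclusion
  have habs : ‖g t - z‖ < 2 / m * t := by
    have htmem : t ∈ Icc (0:ℝ) t := ⟨ht.le, le_refl _⟩
    have heq := hgz t htmem
    have hnormint : IntervalIntegrable (fun u => ‖(2:ℂ) / (g u - (U u : ℂ))‖) volume 0 t :=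
      (hint t htmem).norm
    have hb1 : ‖∫ u in (0:ℝ)..t, (2:ℂ) / (g u - (U u : ℂ))‖
        ≤ ∫ u in (0:ℝ)..t, ‖(2:ℂ) / (g u - (U u : ℂ))‖ :=
      intervalIntegral.norm_integral_le_integral_norm ht.le
    have hpos : 0 < ∫ u in (0:ℝ)..t, (2 / m - ‖(2:ℂ) / (g u - (U u : ℂ))‖) := by
      apply intervalIntegral.intervalIntegral_pos_of_pos_on
        (intervalIntegrable_const.sub hnormint) _ ht
      intro u hu
      have hu' : u ∈ Ico (0:ℝ) t := ⟨hu.1.le, hu.2⟩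
      have hFu : m < F u := hAs u hu'
      have hFup : 0 < F u := hFpos u ⟨hu'.1, hu'.2.le⟩
      have : ‖(2 : ℂ) / (g u - (U u : ℂ))‖ = 2 / F u := by
        rw [norm_div, Complex.norm_ofNat]
      rw [this, sub_pos]
      gcongr
    have hsubint : (∫ u in (0:ℝ)..t, (2 / m - ‖(2:ℂ) / (g u - (U u : ℂ))‖))
        = 2 / m * t - ∫ u in (0:ℝ)..t, ‖(2:ℂ) / (g u - (U u : ℂ))‖ := by
      rw [intervalIntegral.integral_sub intervalIntegrable_const hnormint,
        intervalIntegral.integral_const]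
      simp [mul_comm]
    rw [heq]
    rw [hsubint] at hpos
    linarith
  have hfirst : ‖g t - z‖ < 4 * t / (lam + r) := by
    have : 2 / m * t = 4 * t / (lam + r) := by
      rw [hm, div_div_eq_mul_div]; ring
    rwa [this] at habs
  -- imaginary part
  have hcc : Continuous fun u => min (max u 0) t := (continuous_id.max continuous_const).min continuous_const
  set c : ℝ → ℝ := fun u => min (max u 0) t with hc
  have hc_mem : ∀ u, c u ∈ Icc (0:ℝ) t := fun u =>
    ⟨le_min (le_max_right _ _) ht.le, min_le_right _ _⟩
  have hc_eq : ∀ u ∈ Icc (0:ℝ) t, c u = u := fun u hu => by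
    rw [hc]; simp only [max_eq_left hu.1, min_eq_left hu.2]
  set Q : ℝ → ℝ := fun u => 2 / (F (c u)) ^ 2 with hQ
  have hQc : Continuous Q := by
    have hFcc : Continuous (fun u => F (c u)) := by
      rw [continuous_iff_continuousAt]
      intro u
      exact (hFca (c u) (hc_mem u)).comp hcc.continuousAt
    apply continuous_const.div (hFcc.pow 2)
    intro u
    exact pow_ne_zero 2 (ne_of_gt (hFpos (c u) (hc_mem u)))
  set J : ℝ → ℝ := fun s => ∫ u in (0:ℝ)..s, Q u with hJ
  have hJ' : ∀ s, HasDerivAt J (Q s) s := fun s =>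
    (hQc.integral_hasStrictDerivAt 0 s).hasDerivAt
  set φ : ℝ → ℝ := fun s => (g s).im * Real.exp (J s) with hφ
  have hφ' : ∀ s ∈ Icc (0:ℝ) t, HasDerivAt φ 0 s := by
    intro s hs
    have hgd := hode s (hsub hs)
    have him : HasDerivAt (fun u => (g u).im) ((2 / (g s - (U s : ℂ))).im) s :=
      Complex.imCLM.hasFDerivAt.comp_hasDerivAt s hgd
    have hexp : HasDerivAt (fun u => Real.exp (J u)) (Real.exp (J s) * Q s) s :=
      (hJ' s).exp
    have hmul := him.mul hexp
    have hw : g s - (U s : ℂ) ≠ 0 := sub_ne_zero.mpr (hne s (hsub hs))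
    have hFs : 0 < F s := hFpos s hs
    have him2 : (2 / (g s - (U s : ℂ))).im = -2 * (g s).im / F s ^ 2 := by
      have hns : Complex.normSq (g s - (U s : ℂ)) = F s ^ 2 := (Complex.sq_norm _).symm
      rw [Complex.div_im, hns]
      have him3 : (g s - (U s : ℂ)).im = (g s).im := by simp
      rw [him3]
      norm_num
      ring
    have hQs : Q s = 2 / F s ^ 2 := by
      show 2 / F (c s) ^ 2 = 2 / F s ^ 2
      rw [hc_eq s hs]
    have : (2 / (g s - (U s : ℂ))).im * Real.exp (J s)
        + (g s).im * (Real.exp (J s) * Q s) = 0 := by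
      rw [him2, hQs]
      field_simp
      ring
    rw [this] at hmul
    exact hmul
  have hconst := constant_of_has_deriv_right_zero
    (f := φ) (a := 0) (b := t)
    (fun s hs => (hφ' s hs).continuousAt.continuousWithinAt)
    (fun s hs => ((hφ' s ⟨hs.1, hs.2.le⟩).hasDerivWithinAt))
  have hconst_t : φ t = φ 0 := hconst t ⟨ht.le, le_refl _⟩
  have hJ0 : J 0 = 0 := intervalIntegral.integral_same
  have hφ0 : φ 0 = z.im := by rw [hφ]; simp [hJ0, hg0]
  have hgtim : (g t).im = z.im * Real.exp (-(J t)) := by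
    have h1 : (g t).im * Real.exp (J t) = z.im := by
      rw [← hφ0]; exact hconst_t
    have h2 : Real.exp (J t) ≠ 0 := (Real.exp_pos _).ne'
    rw [Real.exp_neg]
    field_simp
    linarith [h1]
  have hratio : (g t).im / z.im = Real.exp (-(J t)) := by
    rw [hgtim]
    field_simp
  have hJnonneg : 0 ≤ J t := by
    apply intervalIntegral.integral_nonneg ht.le
    intro u _
    rw [hQ]
    positivity
  have hsecond : (g t).im / z.im ≤ 1 := by
    rw [hratio]
    exact Real.exp_le_one_iff.mpr (by linarith)
  have hJlt : J t < 2 / m ^ 2 * t := by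
    have hQint : IntervalIntegrable Q volume 0 t := hQc.intervalIntegrable 0 t
    have hpos : 0 < ∫ u in (0:ℝ)..t, (2 / m ^ 2 - Q u) := by
      apply intervalIntegral.intervalIntegral_pos_of_pos_on
        (intervalIntegrable_const.sub hQint) _ ht
      intro u hu
      have hu' : u ∈ Ico (0:ℝ) t := ⟨hu.1.le, hu.2⟩
      have hFu : m < F u := hAs u hu'
      have hQu : Q u = 2 / F u ^ 2 := by
        show 2 / F (c u) ^ 2 = 2 / F u ^ 2
        rw [hc_eq u ⟨hu'.1, hu'.2.le⟩]
      rw [hQu, sub_pos]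
      have hm2 : m ^ 2 < F u ^ 2 := by nlinarith
      exact div_lt_div_of_pos_left (by norm_num) (pow_pos hm0 2) hm2
    have hsubint : (∫ u in (0:ℝ)..t, (2 / m ^ 2 - Q u)) = 2 / m ^ 2 * t - J t := by
      rw [intervalIntegral.integral_sub intervalIntegrable_const hQint,
        intervalIntegral.integral_const]
      simp [hJ, mul_comm]
    rw [hsubint] at hpos
    linarith
  have hthird : Real.exp (-(8 * t) / (lam + r) ^ 2) < (g t).im / z.im := by
    rw [hratio]
    apply Real.exp_lt_exp.mpr
    have hmt : 2 / m ^ 2 * t = 8 * t / (lam + r) ^ 2 := by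
      rw [hm, div_pow, div_div_eq_mul_div]; ring
    rw [neg_div]
    rw [hmt] at hJlt
    linarith
  exact ⟨hfirst, hsecond, hthird⟩
end

section
/- Let $U:[0,\infty)\to\mathbb{R}$ be continuous and $g_t$ the chordal Loewner chain driven by $U$. Suppose $z\in\mathbb{H}$, $t>0$, and $\lambda_t=\min_{0\le s\le t}|z-U(s)|$ satisfies $\lambda_t\ge\sqrt{8t}$. Then $t< T_z$, i.e., the solution $g_s(z)$ does not blow up on $[0,t]$ (equivalently $\inf_{0\le s\le t}|g_s(z)-U(s)|>0$). -/
open Set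

noncomputable def loewnerTrunc (r : ℝ) (ζ : ℂ) : ℂ :=
  2 * (starRingEnd ℂ) ζ / ((max (‖ζ‖ ^ 2) (r ^ 2) : ℝ) : ℂ)

lemma loewnerTrunc_mul_le (r : ℝ) (hr : 0 ≤ r) (ζ : ℂ) :
    ‖ζ‖ * r ≤ max (‖ζ‖ ^ 2) (r ^ 2) := by
  rcases le_total (‖ζ‖) r with h | h
  · nlinarith [le_max_right (‖ζ‖ ^ 2) (r ^ 2), norm_nonneg ζ]
  · nlinarith [le_max_left (‖ζ‖ ^ 2) (r ^ 2), norm_nonneg ζ]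

lemma loewnerTrunc_norm_le {r : ℝ} (hr : 0 < r) (ζ : ℂ) : ‖loewnerTrunc r ζ‖ ≤ 2 / r := by
  have hM : (0:ℝ) < max (‖ζ‖ ^ 2) (r ^ 2) :=
    lt_of_lt_of_le (by positivity) (le_max_right _ _)
  have h1 : ‖loewnerTrunc r ζ‖ = 2 * ‖ζ‖ / max (‖ζ‖ ^ 2) (r ^ 2) := by
    rw [loewnerTrunc, norm_div, norm_mul]
    simp [Complex.norm_conj, Complex.norm_real, Real.norm_eq_abs, abs_of_pos hM]
  rw [h1, div_le_div_iff₀ hM hr]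
  nlinarith [loewnerTrunc_mul_le r hr.le ζ]

lemma loewnerTrunc_eq {r : ℝ} (hr : 0 < r) {ζ : ℂ} (hζ : r ≤ ‖ζ‖) :
    loewnerTrunc r ζ = 2 / ζ := by
  have hζ0 : ζ ≠ 0 := by
    intro h
    rw [h] at hζ; simp at hζ; linarith
  rw [loewnerTrunc, max_eq_left (by nlinarith [norm_nonneg ζ] : r ^ 2 ≤ ‖ζ‖ ^ 2)]
  rw [show ((‖ζ‖ ^ 2 : ℝ) : ℂ) = ζ * (starRingEnd ℂ) ζ by
    rw [Complex.sq_norm, Complex.mul_conj]]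
  have hc : (starRingEnd ℂ) ζ ≠ 0 := by simpa using hζ0
  field_simp

lemma loewnerTrunc_aux_field (c d A B : ℂ) (hA : A ≠ 0) (hB : B ≠ 0) :
    2 * c / A - 2 * d / B = 2 * (c - d) / A + 2 * d * ((B - A) / (A * B)) := by
  field_simp
  ring

lemma loewnerTrunc_lip {r : ℝ} (hr : 0 < r) (ζ η : ℂ) :
    ‖loewnerTrunc r ζ - loewnerTrunc r η‖ ≤ 6 / r ^ 2 * ‖ζ - η‖ := by
  have ha0 : 0 ≤ ‖ζ‖ := norm_nonneg ζ
  have hb0 : 0 ≤ ‖η‖ := norm_nonneg η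
  have hMz0 : (0:ℝ) < max (‖ζ‖ ^ 2) (r ^ 2) :=
    lt_of_lt_of_le (by positivity) (le_max_right _ _)
  have hMh0 : (0:ℝ) < max (‖η‖ ^ 2) (r ^ 2) :=
    lt_of_lt_of_le (by positivity) (le_max_right _ _)
  have hAz : ((max (‖ζ‖ ^ 2) (r ^ 2) : ℝ) : ℂ) ≠ 0 := Complex.ofReal_ne_zero.mpr hMz0.ne'
  have hAh : ((max (‖η‖ ^ 2) (r ^ 2) : ℝ) : ℂ) ≠ 0 := Complex.ofReal_ne_zero.mpr hMh0.ne'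
  have hD0 : 0 ≤ ‖ζ - η‖ := norm_nonneg _
  have expand : loewnerTrunc r ζ - loewnerTrunc r η
      = 2 * ((starRingEnd ℂ) ζ - (starRingEnd ℂ) η) / ((max (‖ζ‖ ^ 2) (r ^ 2) : ℝ) : ℂ)
        + 2 * (starRingEnd ℂ) η *
          ((((max (‖η‖ ^ 2) (r ^ 2) : ℝ) : ℂ) - ((max (‖ζ‖ ^ 2) (r ^ 2) : ℝ) : ℂ))
            / (((max (‖ζ‖ ^ 2) (r ^ 2) : ℝ) : ℂ) * ((max (‖η‖ ^ 2) (r ^ 2) : ℝ) : ℂ))) :=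
    loewnerTrunc_aux_field _ _ _ _ hAz hAh
  rw [expand]
  have hterm1 : ‖2 * ((starRingEnd ℂ) ζ - (starRingEnd ℂ) η) / ((max (‖ζ‖ ^ 2) (r ^ 2) : ℝ) : ℂ)‖
      = 2 * ‖ζ - η‖ / max (‖ζ‖ ^ 2) (r ^ 2) := by
    rw [norm_div, norm_mul]
    simp only [Complex.norm_real, Real.norm_eq_abs, abs_of_pos hMz0]
    rw [← map_sub, Complex.norm_conj]
    norm_num
  have hterm2 : ‖2 * (starRingEnd ℂ) η *
          ((((max (‖η‖ ^ 2) (r ^ 2) : ℝ) : ℂ) - ((max (‖ζ‖ ^ 2) (r ^ 2) : ℝ) : ℂ))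
            / (((max (‖ζ‖ ^ 2) (r ^ 2) : ℝ) : ℂ) * ((max (‖η‖ ^ 2) (r ^ 2) : ℝ) : ℂ)))‖
      = 2 * ‖η‖ * (|max (‖η‖ ^ 2) (r ^ 2) - max (‖ζ‖ ^ 2) (r ^ 2)|
          / (max (‖ζ‖ ^ 2) (r ^ 2) * max (‖η‖ ^ 2) (r ^ 2))) := by
    rw [norm_mul, norm_mul, norm_div, norm_mul, ← Complex.ofReal_sub]
    simp only [Complex.norm_conj, Complex.norm_real, Real.norm_eq_abs, Complex.norm_two,
      abs_of_pos hMz0, abs_of_pos hMh0]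
  have habs : |max (‖η‖ ^ 2) (r ^ 2) - max (‖ζ‖ ^ 2) (r ^ 2)|
      ≤ (‖ζ‖ + ‖η‖) * ‖ζ - η‖ := by
    have h1 := abs_max_sub_max_le_abs (‖η‖ ^ 2) (‖ζ‖ ^ 2) (r ^ 2)
    have h2 : |‖η‖ ^ 2 - ‖ζ‖ ^ 2|
        = |‖η‖ - ‖ζ‖| * |‖η‖ + ‖ζ‖| := by
      rw [← abs_mul]; ring_nf
    have h3 : |‖η‖ - ‖ζ‖| ≤ ‖ζ - η‖ := by
      rw [norm_sub_rev]; exact abs_norm_sub_norm_le η ζ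
    have h4 : |‖η‖ + ‖ζ‖| = ‖ζ‖ + ‖η‖ := by
      rw [abs_of_nonneg (by linarith)]; ring
    calc |max (‖η‖ ^ 2) (r ^ 2) - max (‖ζ‖ ^ 2) (r ^ 2)|
        ≤ |‖η‖ ^ 2 - ‖ζ‖ ^ 2| := h1
      _ = |‖η‖ - ‖ζ‖| * (‖ζ‖ + ‖η‖) := by rw [h2, h4]
      _ ≤ ‖ζ - η‖ * (‖ζ‖ + ‖η‖) :=
          mul_le_mul_of_nonneg_right h3 (by linarith)
      _ = (‖ζ‖ + ‖η‖) * ‖ζ - η‖ := by ring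
  have har : ‖ζ‖ * r ≤ max (‖ζ‖ ^ 2) (r ^ 2) := loewnerTrunc_mul_le r hr.le ζ
  have hbr : ‖η‖ * r ≤ max (‖η‖ ^ 2) (r ^ 2) := loewnerTrunc_mul_le r hr.le η
  have hbb : ‖η‖ ^ 2 ≤ max (‖η‖ ^ 2) (r ^ 2) := le_max_left _ _
  have hrz : r ^ 2 ≤ max (‖ζ‖ ^ 2) (r ^ 2) := le_max_right _ _
  have ht1 : 2 * ‖ζ - η‖ / max (‖ζ‖ ^ 2) (r ^ 2) ≤ 2 / r ^ 2 * ‖ζ - η‖ := by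
    rw [div_le_iff₀ hMz0,
      show 2 / r ^ 2 * ‖ζ - η‖ * (max (‖ζ‖ ^ 2) (r ^ 2))
        = 2 * ‖ζ - η‖ * (max (‖ζ‖ ^ 2) (r ^ 2)) / r ^ 2 by ring,
      le_div_iff₀ (by positivity : (0:ℝ) < r ^ 2)]
    nlinarith
  have ht2 : 2 * ‖η‖ * (|max (‖η‖ ^ 2) (r ^ 2) - max (‖ζ‖ ^ 2) (r ^ 2)|
          / (max (‖ζ‖ ^ 2) (r ^ 2) * max (‖η‖ ^ 2) (r ^ 2)))
      ≤ 4 / r ^ 2 * ‖ζ - η‖ := by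
    have hstep : 2 * ‖η‖ * (|max (‖η‖ ^ 2) (r ^ 2) - max (‖ζ‖ ^ 2) (r ^ 2)|
          / (max (‖ζ‖ ^ 2) (r ^ 2) * max (‖η‖ ^ 2) (r ^ 2)))
        ≤ 2 * ‖η‖ * (((‖ζ‖ + ‖η‖) * ‖ζ - η‖)
          / (max (‖ζ‖ ^ 2) (r ^ 2) * max (‖η‖ ^ 2) (r ^ 2))) := by
      gcongr
    refine hstep.trans ?_
    rw [mul_div_assoc', div_le_iff₀ (mul_pos hMz0 hMh0),
      show 4 / r ^ 2 * ‖ζ - η‖ * (max (‖ζ‖ ^ 2) (r ^ 2) * max (‖η‖ ^ 2) (r ^ 2))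
        = 4 * ‖ζ - η‖ * (max (‖ζ‖ ^ 2) (r ^ 2) * max (‖η‖ ^ 2) (r ^ 2)) / r ^ 2 by ring,
      le_div_iff₀ (by positivity : (0:ℝ) < r ^ 2)]
    have p1 : (‖ζ‖ * r) * (‖η‖ * r)
        ≤ max (‖ζ‖ ^ 2) (r ^ 2) * max (‖η‖ ^ 2) (r ^ 2) :=
      mul_le_mul har hbr (by positivity) hMz0.le
    have p2 : (‖η‖ ^ 2) * (r ^ 2)
        ≤ max (‖η‖ ^ 2) (r ^ 2) * max (‖ζ‖ ^ 2) (r ^ 2) :=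
      mul_le_mul hbb hrz (by positivity) hMh0.le
    nlinarith [mul_le_mul_of_nonneg_left p1 (by positivity : (0:ℝ) ≤ 2 * ‖ζ - η‖),
      mul_le_mul_of_nonneg_left p2 (by positivity : (0:ℝ) ≤ 2 * ‖ζ - η‖)]
  calc ‖_ + _‖ ≤ _ + _ := norm_add_le _ _
    _ ≤ 2 / r ^ 2 * ‖ζ - η‖ + 4 / r ^ 2 * ‖ζ - η‖ := by
        rw [hterm1, hterm2]; exact add_le_add ht1 ht2
    _ = 6 / r ^ 2 * ‖ζ - η‖ := by ring

lemma loewnerTrunc_lipschitzWith {r : ℝ} (hr : 0 < r) :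
    LipschitzWith ⟨6 / r ^ 2, by positivity⟩ (loewnerTrunc r) := by
  apply LipschitzWith.of_dist_le_mul
  intro x y
  rw [dist_eq_norm, dist_eq_norm]; exact loewnerTrunc_lip hr x y

/-- if `λ_t = min_{0≤s≤t}|z - U(s)| ≥ √(8t)` then the chordal Loewner
trajectory from `z` exists on all of `[0,t]` without blowing up:
`inf_{0≤s≤t}|g_s(z) - U(s)| > 0` (i.e. `t < T_z`). -/
theorem loewner_no_blowup
    (U : ℝ → ℝ) (hU : Continuous U) (z : ℂ) (hz : 0 < z.im)
    (t : ℝ) (ht : 0 < t)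
    (hlam : Real.sqrt (8 * t) ≤ sInf ((fun s => ‖z - (U s : ℂ)‖) '' Set.Icc 0 t)) :
    ∃ g : ℝ → ℂ, g 0 = z
      ∧ (∀ s ∈ Set.Icc (0:ℝ) t, HasDerivAt g (2 / (g s - (U s : ℂ))) s)
      ∧ 0 < sInf ((fun s => ‖g s - (U s : ℂ)‖) '' Set.Icc 0 t) := by
  set lam := sInf ((fun s => ‖z - (U s : ℂ)‖) '' Set.Icc 0 t) with hlamdef
  have hsq : (0:ℝ) < Real.sqrt (8 * t) := Real.sqrt_pos.mpr (by linarith)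
  have hlam0 : 0 < lam := lt_of_lt_of_le hsq hlam
  have h8t : 8 * t ≤ lam ^ 2 := by
    have h1 : Real.sqrt (8 * t) ^ 2 = 8 * t := Real.sq_sqrt (by linarith)
    nlinarith [Real.sqrt_nonneg (8 * t)]
  set r := lam / 2 with hrdef
  have hr : 0 < r := by positivity
  -- Picard-Lindelöf on [-1, t+1]
  have hpl : IsPicardLindelof (fun s w => loewnerTrunc r (w - (U s : ℂ))) (tmin := -1) (tmax := t + 1)
      (⟨0, by constructor <;> linarith⟩ : Icc (-1:ℝ) (t + 1)) z
      ⟨2 / r * (t + 1), by positivity⟩ 0 ⟨2 / r, by positivity⟩ ⟨6 / r ^ 2, by positivity⟩ := by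
    refine ⟨?_, ?_, ?_, ?_⟩
    · intro s _
      apply LipschitzWith.lipschitzOnWith
      apply LipschitzWith.of_dist_le_mul
      intro x y
      have := loewnerTrunc_lip hr (x - (U s : ℂ)) (y - (U s : ℂ))
      rw [sub_sub_sub_cancel_right] at this
      rw [dist_eq_norm, dist_eq_norm]; exact this
    · intro x _
      apply Continuous.continuousOn
      exact (loewnerTrunc_lipschitzWith hr).continuous.comp
        (continuous_const.sub (Complex.continuous_ofReal.comp hU))
    · intro s _ x _
      exact loewnerTrunc_norm_le hr _
    · have hmax : max (t + 1 - 0) (0 - -1) = t + 1 := by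
        rw [sub_zero, zero_sub, neg_neg]
        exact max_eq_left (by linarith)
      simp only [NNReal.coe_mk, NNReal.coe_zero, sub_zero, zero_sub, neg_neg]
      rw [max_eq_left (by linarith)]
      exact le_refl _
  obtain ⟨f, hf0, hderiv⟩ := hpl.exists_eq_forall_mem_Icc_hasDerivWithinAt₀
  have hf0 : f 0 = z := hf0
  have hsub : Set.Icc (0:ℝ) t ⊆ Set.Icc (-1) (t + 1) :=
    Set.Icc_subset_Icc (by linarith) (by linarith)
  have hDerivAt : ∀ s ∈ Set.Icc (0:ℝ) t, HasDerivAt f (loewnerTrunc r (f s - (U s : ℂ))) s := by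
    intro s hs
    exact (hderiv s (hsub hs)).hasDerivAt
      (Icc_mem_nhds (by linarith [hs.1]) (by linarith [hs.2]))
  -- a priori growth bound
  have hgrow : ∀ s ∈ Set.Icc (0:ℝ) t, ‖f s - z‖ ≤ 2 / r * t := by
    intro s hs
    have h0mem : (0:ℝ) ∈ Set.Icc (0:ℝ) t := ⟨le_refl _, ht.le⟩
    have := (convex_Icc (0:ℝ) t).norm_image_sub_le_of_norm_hasDerivWithin_le
      (f' := fun x => loewnerTrunc r (f x - (U x : ℂ)))
      (fun x hx => (hDerivAt x hx).hasDerivWithinAt)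
      (fun x _ => loewnerTrunc_norm_le hr _) h0mem hs
    rw [hf0] at this
    have hs0 : ‖s - 0‖ = s := by rw [sub_zero, Real.norm_eq_abs, abs_of_nonneg hs.1]
    rw [hs0] at this
    refine this.trans ?_
    have := hs.2
    gcongr
  -- lower bound on |f s - U s|
  have hbdd : BddBelow ((fun s => ‖z - (U s : ℂ)‖) '' Set.Icc 0 t) := by
    refine ⟨0, fun x hx => ?_⟩
    obtain ⟨s, _, rfl⟩ := hx
    exact norm_nonneg _
  have hlow : ∀ s ∈ Set.Icc (0:ℝ) t, r ≤ ‖f s - (U s : ℂ)‖ := by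
    intro s hs
    have h1 : lam ≤ ‖z - (U s : ℂ)‖ := csInf_le hbdd ⟨s, hs, rfl⟩
    have h2 : ‖z - (U s : ℂ)‖
        ≤ ‖f s - z‖ + ‖f s - (U s : ℂ)‖ := by
      have h3 : z - (U s : ℂ) = (z - f s) + (f s - (U s : ℂ)) := by ring
      calc ‖z - (U s : ℂ)‖ = ‖(z - f s) + (f s - (U s : ℂ))‖ := by
            rw [← h3]
        _ ≤ ‖z - f s‖ + ‖f s - (U s : ℂ)‖ := norm_add_le _ _
        _ = ‖f s - z‖ + ‖f s - (U s : ℂ)‖ := by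
            rw [norm_sub_rev]
    have h4 := hgrow s hs
    have h5 : 2 / r * t ≤ lam / 2 := by
      rw [hrdef]
      rw [div_mul_eq_mul_div, div_le_div_iff₀ (by positivity) (by norm_num : (0:ℝ) < 2)]
      nlinarith
    rw [hrdef]
    linarith
  refine ⟨f, hf0, ?_, ?_⟩
  · intro s hs
    have h := hDerivAt s hs
    rwa [loewnerTrunc_eq hr (hlow s hs)] at h
  · refine lt_of_lt_of_le hr ?_
    apply le_csInf
    · exact ⟨_, ⟨0, ⟨le_refl _, ht.le⟩, rfl⟩⟩
    · intro x hx
      obtain ⟨s, hs, rfl⟩ := hx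
      exact hlow s hs
end
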